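/- Let K be a compact Hausdorff space. Then C(K) has the perfect Daugavet property if and only if K has no G_δ-points. Moreover, if K has no G_δ-points, then C(K) has the n-perfect Daugavet property for every natural number n. -/
import Mathlib

universe u

open Set
/-- A slice of the closed unit ball of `X`. -/
def ballSlice {X : Type u} [NormedAddCommGroup X] [NormedSpace ℝ X]
    (f : X →L[ℝ] ℝ) (a : ℝ) : Set X :=
  {x | ‖x‖ ≤ 1 ∧ ‖f‖ - a < f x}

/-- `X` has the `κ`-perfect Daugavet property. -/
def HasKPerfectDaugavet (X : Type u) [NormedAddCommGroup X] [NormedSpace ℝ X]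
    (κ : Cardinal.{u}) : Prop :=
  ∀ Y : Set X, Cardinal.mk Y ≤ κ → (∀ y ∈ Y, ‖y‖ = 1) →
    ∀ (f : X →L[ℝ] ℝ) (a : ℝ), 0 < a →
      ∃ x ∈ ballSlice f a, ∀ y ∈ Y, ‖y + x‖ = 2

section Aux

/-- every slice of the unit ball is nonempty -/
lemma slice_nonempty' {X : Type*} [NormedAddCommGroup X] [NormedSpace ℝ X]
    (f : X →L[ℝ] ℝ) {a : ℝ} (ha : 0 < a) : ∃ h : X, ‖h‖ ≤ 1 ∧ ‖f‖ - a < f h := by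
  rcases lt_or_ge (‖f‖ - a) 0 with h0 | h0
  · exact ⟨0, by simp, by simpa using h0⟩
  · have hr : ‖f‖ - a < ‖f‖ := by linarith
    obtain ⟨x, hx1, hx2⟩ := f.exists_lt_apply_of_lt_opNorm hr
    rw [Real.norm_eq_abs] at hx2
    rcases le_or_gt 0 (f x) with hfx | hfx
    · rw [abs_of_nonneg hfx] at hx2
      exact ⟨x, hx1.le, hx2⟩
    · refine ⟨-x, by simpa using hx1.le, ?_⟩
      rw [map_neg]
      rwa [abs_of_neg hfx] at hx2

variable {K : Type u} [TopologicalSpace K] [CompactSpace K] [T2Space K]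

/-- sup-norm of a continuous map on a nonempty compact space is attained -/
lemma exists_norm_apply_eq [Nonempty K] (w : C(K, ℝ)) : ∃ t : K, |w t| = ‖w‖ := by
  obtain ⟨t, -, ht⟩ := isCompact_univ.exists_isMaxOn univ_nonempty
    ((continuous_abs.comp w.continuous).continuousOn)
  refine ⟨t, le_antisymm ?_ ?_⟩
  · have := w.norm_coe_le_norm t
    rwa [Real.norm_eq_abs] at this
  · refine (ContinuousMap.norm_le _ (abs_nonneg _)).2 fun s => ?_
    rw [Real.norm_eq_abs]
    exact ht (mem_univ s)

lemma unitSet_infinite (hG : ∀ x : K, ¬ IsGδ ({x} : Set K)) (y : C(K, ℝ)) (hy : ‖y‖ = 1) :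
    {t : K | |y t| = 1}.Infinite := by
  have hKne : Nonempty K := by
    by_contra h
    rw [not_nonempty_iff] at h
    have : ‖y‖ ≤ 0 := (ContinuousMap.norm_le _ le_rfl).2 fun x => (IsEmpty.false x).elim
    rw [hy] at this; linarith
  have habs : ∀ t : K, |y t| ≤ 1 := by
    intro t
    have := y.norm_coe_le_norm t
    rwa [Real.norm_eq_abs, hy] at this
  have hGδ : IsGδ {t : K | |y t| = 1} := by
    have heq : {t : K | |y t| = 1} = ⋂ n : ℕ, {t : K | 1 - 1 / (n + 1) < |y t|} := by
      ext t
      simp only [mem_setOf_eq, mem_iInter]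
      constructor
      · intro h n
        have : (0 : ℝ) < 1 / (n + 1) := by positivity
        rw [h]; linarith
      · intro h
        by_contra hne'
        have hlt : |y t| < 1 := lt_of_le_of_ne (habs t) hne'
        obtain ⟨n, hn⟩ := exists_nat_one_div_lt (by linarith : (0:ℝ) < 1 - |y t|)
        have := h n
        linarith
    rw [heq]
    exact IsGδ.iInter_of_isOpen fun n =>
      isOpen_lt continuous_const (continuous_abs.comp y.continuous)
  have hFne : {t : K | |y t| = 1}.Nonempty := by
    obtain ⟨t, ht⟩ := exists_norm_apply_eq y
    exact ⟨t, by rw [mem_setOf_eq, ht, hy]⟩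
  by_contra hinf
  rw [Set.not_infinite] at hinf
  obtain ⟨t, ht⟩ := hFne
  apply hG t
  have : ({t} : Set K) = {s : K | |y s| = 1} ∩ (({s : K | |y s| = 1} \ {t})ᶜ) := by
    ext s
    simp only [mem_singleton_iff, mem_inter_iff, mem_compl_iff, mem_diff, mem_setOf_eq,
      not_and, not_not]
    constructor
    · rintro rfl
      exact ⟨ht, fun _ => rfl⟩
    · rintro ⟨hs, h2⟩
      exact h2 hs
  rw [this]
  exact hGδ.inter ((hinf.subset diff_subset).isClosed.isOpen_compl.isGδ)

/-- among finitely many functions with pairwise "disjoint supports", one has small functional value -/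
lemma exists_small_perturb (f : C(K, ℝ) →L[ℝ] ℝ) (s : Finset K) (hs : s.Nonempty)
    (g : K → C(K, ℝ)) (hnorm : ∀ i ∈ s, ‖g i‖ ≤ 2)
    (hdisj : ∀ (t : K), ∀ i ∈ s, ∀ j ∈ s, i ≠ j → g i t = 0 ∨ g j t = 0) :
    ∃ i ∈ s, |f (g i)| ≤ 2 * ‖f‖ / s.card := by
  classical
  set ε : K → ℝ := fun i => if 0 ≤ f (g i) then 1 else -1 with hε
  set G : C(K, ℝ) := ∑ i ∈ s, ε i • g i with hG
  have hεabs : ∀ i, |ε i| = 1 := by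
    intro i
    by_cases h : 0 ≤ f (g i) <;> simp [hε, h]
  have hGnorm : ‖G‖ ≤ 2 := by
    refine (ContinuousMap.norm_le _ (by norm_num)).2 fun t => ?_
    have hGt : G t = ∑ i ∈ s, ε i * g i t := by
      rw [hG, ContinuousMap.sum_apply]
      simp
    rw [Real.norm_eq_abs, hGt]
    by_cases hex : ∃ i ∈ s, g i t ≠ 0
    · obtain ⟨i₀, hi₀, hne⟩ := hex
      rw [Finset.sum_eq_single_of_mem i₀ hi₀ ?_]
      · rw [abs_mul, hεabs, one_mul]
        calc |g i₀ t| ≤ ‖g i₀‖ := by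
              have := (g i₀).norm_coe_le_norm t
              rwa [Real.norm_eq_abs] at this
          _ ≤ 2 := hnorm i₀ hi₀
      · intro j hj hji
        rcases hdisj t j hj i₀ hi₀ hji with h | h
        · rw [h, mul_zero]
        · exact absurd h hne
    · push_neg at hex
      rw [Finset.sum_eq_zero fun i hi => by rw [hex i hi, mul_zero]]
      norm_num
  have hsum : ∑ i ∈ s, |f (g i)| ≤ 2 * ‖f‖ := by
    have h1 : f G = ∑ i ∈ s, |f (g i)| := by
      rw [hG, map_sum]
      refine Finset.sum_congr rfl fun i _ => ?_
      rw [map_smul, smul_eq_mul]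
      by_cases h : 0 ≤ f (g i)
      · rw [abs_of_nonneg h]; simp [hε, h]
      · rw [abs_of_neg (lt_of_not_ge h)]; simp [hε, h]
    calc ∑ i ∈ s, |f (g i)| = f G := h1.symm
      _ ≤ |f G| := le_abs_self _
      _ ≤ ‖f‖ * ‖G‖ := by
          have := f.le_opNorm G
          rwa [Real.norm_eq_abs] at this
      _ ≤ ‖f‖ * 2 := by
          have := norm_nonneg f
          nlinarith
      _ = 2 * ‖f‖ := by ring
  have hcard : (0 : ℝ) < s.card := by
    have := Finset.card_pos.2 hs
    exact_mod_cast this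
  by_contra hcon
  push_neg at hcon
  have : ∑ i ∈ s, (2 * ‖f‖ / s.card) < ∑ i ∈ s, |f (g i)| :=
    Finset.sum_lt_sum_of_nonempty hs fun i hi => hcon i hi
  rw [Finset.sum_const, nsmul_eq_mul, mul_div_cancel₀] at this
  · linarith
  · exact ne_of_gt hcard

end Aux
section Step

variable {K : Type u} [TopologicalSpace K] [CompactSpace K] [T2Space K]

lemma step_modify (hG : ∀ x : K, ¬ IsGδ ({x} : Set K)) (f : C(K, ℝ) →L[ℝ] ℝ)
    (y : C(K, ℝ)) (hy : ‖y‖ = 1) (T : Set K) (hT : T.Finite)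
    (x₀ : C(K, ℝ)) (hx₀ : ‖x₀‖ ≤ 1) {c : ℝ} (hc : c < f x₀) :
    ∃ (x₁ : C(K, ℝ)) (t : K), ‖x₁‖ ≤ 1 ∧ c < f x₁ ∧ (∀ s ∈ T, x₁ s = x₀ s) ∧
      x₁ t = y t ∧ |y t| = 1 := by
  classical
  set ε : ℝ := f x₀ - c with hεdef
  have hε : 0 < ε := by simp [hεdef]; linarith
  obtain ⟨N, hN⟩ := exists_nat_gt (2 * ‖f‖ / ε)
  have hN0 : 0 < N := by
    have h : (0:ℝ) < N := lt_of_le_of_lt (by positivity) hN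
    exact_mod_cast h
  have hNε : 2 * ‖f‖ / N < ε := by
    rw [div_lt_iff₀ (by exact_mod_cast hN0)]
    rw [div_lt_iff₀ hε] at hN
    calc 2 * ‖f‖ < N * ε := hN
      _ = ε * N := by ring
  -- N distinct points where |y| = 1, avoiding T
  have hinf : ({t : K | |y t| = 1} \ T).Infinite :=
    (unitSet_infinite hG y hy).diff hT
  obtain ⟨pts, hpts_sub, hpts_card⟩ := hinf.exists_subset_card_eq N
  have hpts_ne : pts.Nonempty := Finset.card_pos.1 (hpts_card ▸ hN0)
  -- pairwise disjoint open neighborhoods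
  obtain ⟨U, hU, hUdisj⟩ := (pts.finite_toSet).t2_separation
  -- shrink to avoid T
  set V : K → Set K := fun t => U t ∩ Tᶜ with hVdef
  have hVopen : ∀ t, IsOpen (V t) := fun t => (hU t).2.inter hT.isClosed.isOpen_compl
  have hVmem : ∀ t ∈ pts, t ∈ V t := by
    intro t ht
    refine ⟨(hU t).1, ?_⟩
    exact (hpts_sub ht).2
  -- Urysohn bump functions
  have key : ∀ t : K, ∃ φ : C(K, ℝ), t ∈ pts →
      (Set.EqOn φ 0 (V t)ᶜ ∧ φ t = 1 ∧ ∀ s, φ s ∈ Set.Icc (0:ℝ) 1) := by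
    intro t
    by_cases ht : t ∈ pts
    · obtain ⟨φ, h0, h1, hr⟩ := exists_continuous_zero_one_of_isClosed
        (hVopen t).isClosed_compl (isClosed_singleton : IsClosed {t})
        (by
          rw [Set.disjoint_right]
          intro a ha
          rw [Set.mem_singleton_iff] at ha
          rw [ha]
          simp only [Set.mem_compl_iff, not_not]
          exact hVmem t ht)
      exact ⟨φ, fun _ => ⟨h0, h1 rfl, hr⟩⟩
    · exact ⟨0, fun h => absurd h ht⟩
  choose φ hφ using key
  set g : K → C(K, ℝ) := fun t => φ t * (ContinuousMap.const K (y t) - x₀) with hgdef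
  have habs_x₀ : ∀ s : K, |x₀ s| ≤ 1 := by
    intro s
    have := x₀.norm_coe_le_norm s
    rw [Real.norm_eq_abs] at this
    linarith
  have hg_zero : ∀ t ∈ pts, ∀ s ∈ (V t)ᶜ, g t s = 0 := by
    intro t ht s hs
    simp only [hgdef, ContinuousMap.mul_apply]
    rw [(hφ t ht).1 hs]
    simp
  have hgnorm : ∀ t ∈ pts, ‖g t‖ ≤ 2 := by
    intro t ht
    refine (ContinuousMap.norm_le _ (by norm_num)).2 fun s => ?_
    simp only [hgdef, ContinuousMap.mul_apply, ContinuousMap.sub_apply,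
      ContinuousMap.const_apply, Real.norm_eq_abs, abs_mul]
    have h1 : |φ t s| ≤ 1 := by
      have := (hφ t ht).2.2 s
      rw [abs_le]; constructor <;> [linarith [this.1]; exact this.2]
    have h2 : |y t - x₀ s| ≤ 2 := by
      have hyt : |y t| = 1 := (hpts_sub ht).1
      have := habs_x₀ s
      rw [abs_le] at this ⊢
      rw [abs_eq (by norm_num : (0:ℝ) ≤ 1)] at hyt
      rcases hyt with h | h <;> constructor <;> linarith
    calc |φ t s| * |y t - x₀ s| ≤ 1 * 2 := by
          apply mul_le_mul h1 h2 (abs_nonneg _) zero_le_one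
      _ = 2 := by norm_num
  have hgdisj : ∀ (s : K), ∀ i ∈ pts, ∀ j ∈ pts, i ≠ j → g i s = 0 ∨ g j s = 0 := by
    intro s i hi j hj hij
    by_cases hsi : s ∈ V i
    · right
      apply hg_zero j hj
      intro hsj
      have : s ∈ U i ∩ U j := ⟨hsi.1, hsj.1⟩
      have hd := hUdisj (Finset.mem_coe.2 hi) (Finset.mem_coe.2 hj) hij
      exact (hd.le_bot this : s ∈ (⊥ : Set K))
    · left
      exact hg_zero i hi s hsi
  obtain ⟨t, htpts, htsmall⟩ := exists_small_perturb f pts hpts_ne g hgnorm hgdisj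
  rw [hpts_card] at htsmall
  refine ⟨x₀ + g t, t, ?_, ?_, ?_, ?_, (hpts_sub htpts).1⟩
  · -- norm ≤ 1
    refine (ContinuousMap.norm_le _ zero_le_one).2 fun s => ?_
    simp only [ContinuousMap.add_apply, hgdef, ContinuousMap.mul_apply,
      ContinuousMap.sub_apply, ContinuousMap.const_apply, Real.norm_eq_abs]
    have hφs := (hφ t htpts).2.2 s
    have hx := habs_x₀ s
    have hyt : |y t| = 1 := (hpts_sub htpts).1
    rw [abs_le] at hx ⊢
    rw [abs_eq (by norm_num : (0:ℝ) ≤ 1)] at hyt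
    obtain ⟨hφ0, hφ1⟩ := hφs
    rcases hyt with h | h <;> rw [h] <;> constructor <;> nlinarith
  · -- slice
    rw [map_add]
    have : -(ε) < f (g t) := by
      have h1 : |f (g t)| < ε := lt_of_le_of_lt htsmall hNε
      rw [abs_lt] at h1
      linarith [h1.1]
    simp only [hεdef] at this
    linarith
  · -- agrees on T
    intro s hs
    simp only [ContinuousMap.add_apply]
    rw [hg_zero t htpts s (fun hsV => hsV.2 hs), add_zero]
  · -- value at t
    simp only [ContinuousMap.add_apply, hgdef, ContinuousMap.mul_apply,
      ContinuousMap.sub_apply, ContinuousMap.const_apply]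
    rw [(hφ t htpts).2.1]
    ring

end Step
section Main

variable {K : Type u} [TopologicalSpace K] [CompactSpace K] [T2Space K]

lemma main_finset (hG : ∀ x : K, ¬ IsGδ ({x} : Set K)) (f : C(K, ℝ) →L[ℝ] ℝ) {a : ℝ}
    (ha : 0 < a) (Y : Finset C(K, ℝ)) :
    (∀ y ∈ Y, ‖y‖ = 1) → ∀ (T : Set K), T.Finite →
      ∀ x₀ : C(K, ℝ), ‖x₀‖ ≤ 1 → ‖f‖ - a < f x₀ →
      ∃ x : C(K, ℝ), ‖x‖ ≤ 1 ∧ ‖f‖ - a < f x ∧ (∀ s ∈ T, x s = x₀ s) ∧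
        ∀ y ∈ Y, ‖y + x‖ = 2 := by
  classical
  induction Y using Finset.induction_on with
  | empty =>
    intro _ T hT x₀ h1 h2
    exact ⟨x₀, h1, h2, fun s _ => rfl, by simp⟩
  | @insert y Y hyY ih =>
    intro hY T hT x₀ hx₀ hfx₀
    obtain ⟨x₁, t, hx₁, hfx₁, hx₁T, hx₁t, hyt⟩ :=
      step_modify hG f y (hY y (Finset.mem_insert_self y Y)) T hT x₀ hx₀ hfx₀
    obtain ⟨x, hx, hfx, hxT, hxY⟩ := ih (fun y' hy' => hY y' (Finset.mem_insert_of_mem hy'))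
      (insert t T) (hT.insert t) x₁ hx₁ hfx₁
    refine ⟨x, hx, hfx, ?_, ?_⟩
    · intro s hs
      rw [hxT s (Set.mem_insert_of_mem t hs), hx₁T s hs]
    · intro y' hy'
      rcases Finset.mem_insert.1 hy' with rfl | hy'
      · have hxt : x t = y' t := by
          rw [hxT t (Set.mem_insert t T), hx₁t]
        have hy'n : ‖y'‖ = 1 := hY y' (Finset.mem_insert_self y' Y)
        have h2 : |(y' + x) t| = 2 := by
          rw [ContinuousMap.add_apply, hxt, ← two_mul, abs_mul, hyt]
          norm_num
        have hge : 2 ≤ ‖y' + x‖ := by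
          have := (y' + x).norm_coe_le_norm t
          rw [Real.norm_eq_abs, h2] at this
          exact this
        have hle : ‖y' + x‖ ≤ 2 := by
          calc ‖y' + x‖ ≤ ‖y'‖ + ‖x‖ := norm_add_le _ _
            _ ≤ 2 := by rw [hy'n]; linarith
        linarith
      · exact hxY y' hy'

lemma main_set (hG : ∀ x : K, ¬ IsGδ ({x} : Set K)) (Y : Set C(K, ℝ)) (hfin : Y.Finite)
    (hY : ∀ y ∈ Y, ‖y‖ = 1) (f : C(K, ℝ) →L[ℝ] ℝ) (a : ℝ) (ha : 0 < a) :
    ∃ x ∈ ballSlice f a, ∀ y ∈ Y, ‖y + x‖ = 2 := by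
  obtain ⟨h, hh1, hh2⟩ := slice_nonempty' f ha
  obtain ⟨x, h1, h2, -, h4⟩ := main_finset hG f ha hfin.toFinset
    (fun y hy => hY y (hfin.mem_toFinset.1 hy)) ∅ Set.finite_empty h hh1 hh2
  exact ⟨x, ⟨h1, h2⟩, fun y hy => h4 y (hfin.mem_toFinset.2 hy)⟩

lemma forward_dir (H : HasKPerfectDaugavet C(K, ℝ) 1) (x₀ : K)
    (hx₀ : IsGδ ({x₀} : Set K)) : False := by
  have : Nonempty K := ⟨x₀⟩
  obtain ⟨y, hy_eq, -, -, hy_range⟩ := exists_continuous_one_zero_of_isCompact_of_isGδ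
    isCompact_singleton hx₀ isClosed_empty (Set.disjoint_empty _)
  have hy1 : y x₀ = 1 := by
    have : x₀ ∈ y ⁻¹' {1} := hy_eq ▸ Set.mem_singleton x₀
    simpa using this
  have hynorm : ‖y‖ = 1 := by
    refine le_antisymm ((ContinuousMap.norm_le _ zero_le_one).2 fun s => ?_) ?_
    · rw [Real.norm_eq_abs, abs_le]
      exact ⟨by linarith [(hy_range s).1], (hy_range s).2⟩
    · have := y.norm_coe_le_norm x₀
      rw [Real.norm_eq_abs, hy1] at this
      simpa using this
  set f : C(K, ℝ) →L[ℝ] ℝ := -(ContinuousMap.evalCLM ℝ x₀) with hfdef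
  obtain ⟨x, hxslice, hxy⟩ := H {y} (by simp) (by simp [hynorm]) f (‖f‖ + 1)
    (by positivity)
  obtain ⟨hx1, hx2⟩ := hxslice
  have hfx : f x = -(x x₀) := rfl
  have hxx₀lt : x x₀ < 1 := by
    rw [hfx] at hx2
    linarith
  have habs_x : ∀ s : K, |x s| ≤ 1 := by
    intro s
    have := x.norm_coe_le_norm s
    rw [Real.norm_eq_abs] at this
    linarith
  have h2 : ‖y + x‖ = 2 := hxy y (Set.mem_singleton y)
  obtain ⟨t, ht⟩ := exists_norm_apply_eq (y + x)
  rw [h2, ContinuousMap.add_apply] at ht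
  have hyt : y t = 1 := by
    have h1 := (hy_range t).1
    have h2' := (hy_range t).2
    have := habs_x t
    rw [abs_le] at this
    by_contra hne
    have : |y t + x t| < 2 := by
      rw [abs_lt]
      constructor <;> [linarith; (have := lt_of_le_of_ne h2' hne; linarith)]
    linarith [ht ▸ this]
  have ht_x₀ : t = x₀ := by
    have : t ∈ ({x₀} : Set K) := by
      rw [hy_eq]
      exact hyt
    simpa using this
  rw [hyt, ht_x₀] at ht
  have := habs_x x₀
  rw [abs_le] at this
  have h0 : (0:ℝ) ≤ 1 + x x₀ := by linarith
  rw [abs_of_nonneg h0] at ht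
  linarith

end Main

/-- `C(K)` has the perfect Daugavet property if and only if the compact Hausdorff space
`K` has no `G_δ`-points; moreover, in that case `C(K)` has the `n`-perfect Daugavet
property for every natural number `n`. -/
theorem ck_perfectDaugavet_iff_no_Gdelta (K : Type u) [TopologicalSpace K]
    [CompactSpace K] [T2Space K] :
    (HasKPerfectDaugavet C(K, ℝ) 1 ↔ ∀ x : K, ¬ IsGδ ({x} : Set K)) ∧
      ((∀ x : K, ¬ IsGδ ({x} : Set K)) →
        ∀ n : ℕ, HasKPerfectDaugavet C(K, ℝ) (n : Cardinal.{u})) := by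
  have main : (∀ x : K, ¬ IsGδ ({x} : Set K)) → ∀ κ : Cardinal.{u}, κ < Cardinal.aleph0 →
      HasKPerfectDaugavet C(K, ℝ) κ := by
    intro hG κ hκ Y hmk hY f a ha
    have hfinY : Y.Finite := by
      have : Finite Y := Cardinal.lt_aleph0_iff_finite.1 (lt_of_le_of_lt hmk hκ)
      exact Set.finite_coe_iff.1 this
    exact main_set hG Y hfinY hY f a ha
  refine ⟨⟨fun H x hx => forward_dir H x hx, fun hG => main hG 1 Cardinal.one_lt_aleph0⟩,
    fun hG n => main hG n (Cardinal.nat_lt_aleph0 n)⟩
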